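/- arXiv:1904.00795 — 2 statements merged into one kernel-verified Lean document; each statement's English description precedes it below -/
import Mathlib

section
/- Let {|ψ_j⟩}_{j=1}^2 and {|φ_k⟩}_{k=1}^2 be two orthonormal bases of ℂ², let C ≥ 0, and let C_{kj} be real numbers with 0 ≤ C_{kj} ≤ C for all k, j. Define the 2×2 matrix D = Σ_{k,j} C_{kj} ⟨ψ_j|φ_k⟩ |ψ_j⟩⟨φ_k|. If X is any 2×2 Hermitian matrix with Tr(X) = 0, then |Tr(DX)| ≤ C · ‖X‖₁. -/
open Matrix ComplexOrder

/-- The trace norm of a complex matrix: the sum of its singular values,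
realized as `Tr √(Aᴴ A)`. -/
noncomputable def traceNorm {d : ℕ} (A : Matrix (Fin d) (Fin d) ℂ) : ℝ :=
  ((((Matrix.posSemidef_conjTranspose_mul_self A).1.eigenvectorUnitary : Matrix (Fin d) (Fin d) ℂ) *
    Matrix.diagonal (fun i => ((Real.sqrt ((Matrix.posSemidef_conjTranspose_mul_self A).1.eigenvalues i) : ℝ) : ℂ)) *
    (star (Matrix.posSemidef_conjTranspose_mul_self A).1.eigenvectorUnitary : Matrix (Fin d) (Fin d) ℂ)).trace).re

/-- Functional calculus for a Hermitian matrix: apply `f` to the eigenvalues in an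
orthonormal eigenbasis. -/
noncomputable def matFun {d : ℕ} {A : Matrix (Fin d) (Fin d) ℂ} (hA : A.IsHermitian)
    (f : ℝ → ℝ) : Matrix (Fin d) (Fin d) ℂ :=
  (hA.eigenvectorUnitary : Matrix (Fin d) (Fin d) ℂ) *
    Matrix.diagonal (fun i => (f (hA.eigenvalues i) : ℂ)) *
    (star hA.eigenvectorUnitary : Matrix (Fin d) (Fin d) ℂ)

/-- `f : (0,∞) → ℝ` is operator monotone decreasing: for all positive definite matrices
`A ≤ B` (Loewner order) of any size, `f(B) ≤ f(A)`. -/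
def OpMonoDecrOn (f : ℝ → ℝ) : Prop :=
  ∀ (n : ℕ) (A B : Matrix (Fin n) (Fin n) ℂ) (hA : A.PosDef) (hB : B.PosDef),
    (B - A).PosSemidef → (matFun hA.1 f - matFun hB.1 f).PosSemidef

/-- The quasi-relative entropy `S_f(ρ‖σ) = Σ_{j,k} λ_j f(μ_k/λ_j) |⟨φ_k|ψ_j⟩|²` computed from
spectral decompositions `ρ = Σ_j λ_j |ψ_j⟩⟨ψ_j|`, `σ = Σ_k μ_k |φ_k⟩⟨φ_k|`. -/
noncomputable def quasiRelEntropy {d : ℕ} (f : ℝ → ℝ) {ρ σ : Matrix (Fin d) (Fin d) ℂ}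
    (hρ : ρ.IsHermitian) (hσ : σ.IsHermitian) : ℝ :=
  ∑ j, ∑ k, hρ.eigenvalues j * f (hσ.eigenvalues k / hρ.eigenvalues j) *
    ‖(inner ℂ (hσ.eigenvectorBasis k) (hρ.eigenvectorBasis j) : ℂ)‖ ^ 2

/-- The Umegaki relative entropy `S(ρ‖σ) = Tr(ρ (log ρ − log σ))`. -/
noncomputable def relEntropy {d : ℕ} {ρ σ : Matrix (Fin d) (Fin d) ℂ}
    (hρ : ρ.IsHermitian) (hσ : σ.IsHermitian) : ℝ :=
  ((ρ * (matFun hρ Real.log - matFun hσ Real.log)).trace).re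

/-- The Tsallis relative q-entropy `S_q(ρ‖σ) = (1/(1−q))(1 − Tr(ρ^q σ^{1−q}))`. -/
noncomputable def tsallisEntropy {d : ℕ} (q : ℝ) {ρ σ : Matrix (Fin d) (Fin d) ℂ}
    (hρ : ρ.IsHermitian) (hσ : σ.IsHermitian) : ℝ :=
  (1 / (1 - q)) *
    (1 - ((matFun hρ (fun x => x ^ q) * matFun hσ (fun x => x ^ (1 - q))).trace).re)

lemma conj_mul_conj' {d : ℕ} (U A B : Matrix (Fin d) (Fin d) ℂ) (hU : star U * U = 1) :
    (U * A * star U) * (U * B * star U) = U * (A * B) * star U := by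
  simp only [Matrix.mul_assoc]
  rw [← Matrix.mul_assoc (star U) U (B * star U), hU, Matrix.one_mul]

lemma traceNorm_herm {d : ℕ} {X : Matrix (Fin d) (Fin d) ℂ} (hX : X.IsHermitian) :
    traceNorm X = ∑ i, |hX.eigenvalues i| := by
  set U := (hX.eigenvectorUnitary : Matrix (Fin d) (Fin d) ℂ) with hUdef
  have hU : star U * U = 1 := Unitary.coe_star_mul_self _
  have hsq := Matrix.posSemidef_conjTranspose_mul_self X
  have hXX : Xᴴ * X = X ^ 2 := by rw [hX.eq, pow_two]
  have hc : cfc Real.sqrt (Xᴴ * X) = cfc (fun x : ℝ => |x|) X := by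
    rw [hXX, ← cfc_comp_pow (fun x => Real.sqrt x) 2 X (ha := (show IsSelfAdjoint X from hX))]
    congr 1
    funext x
    exact Real.sqrt_sq_eq_abs x
  rw [hsq.1.cfc_eq, hX.cfc_eq] at hc
  unfold Matrix.IsHermitian.cfc at hc
  have htr := congrArg Matrix.trace hc
  simp only [Unitary.conjStarAlgAut_apply] at htr
  rw [Matrix.trace_mul_cycle, Unitary.coe_star_mul_self, Matrix.one_mul, Matrix.trace_diagonal,
    Matrix.trace_mul_cycle, Unitary.coe_star_mul_self, Matrix.one_mul,
    Matrix.trace_diagonal] at htr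
  rw [traceNorm, Matrix.trace_mul_cycle, Unitary.coe_star_mul_self, Matrix.one_mul,
    Matrix.trace_diagonal]
  have htr' := congrArg Complex.re htr
  simp only [Function.comp_apply] at htr'
  simpa using htr'

lemma entry_formula {d : ℕ} (U : Matrix (Fin d) (Fin d) ℂ) (c : Fin d → ℂ) (b a : Fin d) :
    (U * Matrix.diagonal c * star U) b a = ∑ i, U b i * c i * (starRingEnd ℂ) (U a i) := by
  rw [Matrix.mul_apply]
  congr 1
  funext i
  rw [Matrix.mul_diagonal, Matrix.star_apply]
  rfl

lemma vecMulVec_trace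
    (ψ φ : OrthonormalBasis (Fin 2) ℂ (EuclideanSpace ℂ (Fin 2)))
    (X : Matrix (Fin 2) (Fin 2) ℂ) (hX : X.IsHermitian) (k j : Fin 2) :
    (Matrix.vecMulVec (fun a => ψ j a) (fun b => star (φ k b)) * X).trace =
      ∑ i, (hX.eigenvalues i : ℂ) * (inner ℂ (φ k) (hX.eigenvectorBasis i) : ℂ) *
        (inner ℂ (hX.eigenvectorBasis i) (ψ j) : ℂ) := by
  have hXent : ∀ b a, X b a = ∑ i, (hX.eigenvectorBasis i b) * (hX.eigenvalues i : ℂ) *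
      (starRingEnd ℂ) (hX.eigenvectorBasis i a) := by
    intro b a
    conv_lhs => rw [hX.spectral_theorem]
    rw [Unitary.conjStarAlgAut_apply, entry_formula]
    simp only [Matrix.IsHermitian.eigenvectorUnitary_apply, Function.comp_apply]
    rfl
  simp only [Matrix.trace, Matrix.diag, Matrix.mul_apply, Matrix.vecMulVec_apply, hXent,
    PiLp.inner_apply, RCLike.inner_apply, Fin.sum_univ_two]
  simp only [Complex.star_def]
  ring

/-- Lemma, 2×2 Hermitian traceless case. For
`D = Σ_{k,j} C_{kj} ⟨ψ_j|φ_k⟩ |ψ_j⟩⟨φ_k|` with `0 ≤ C_{kj} ≤ C` and `X` a 2×2 Hermitian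
traceless matrix, `|Tr(DX)| ≤ C ‖X‖₁`. -/
theorem trace_D_mul_hermitian_traceless_le
    (ψ φ : OrthonormalBasis (Fin 2) ℂ (EuclideanSpace ℂ (Fin 2)))
    (C : ℝ) (hC : 0 ≤ C) (Cm : Fin 2 → Fin 2 → ℝ)
    (hCm : ∀ k j, 0 ≤ Cm k j ∧ Cm k j ≤ C)
    (D : Matrix (Fin 2) (Fin 2) ℂ)
    (hD : D = ∑ k, ∑ j, (Cm k j : ℂ) •
      ((inner ℂ (ψ j) (φ k) : ℂ) • Matrix.vecMulVec (fun a => ψ j a) (fun b => star (φ k b))))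
    (X : Matrix (Fin 2) (Fin 2) ℂ) (hX : X.IsHermitian) (hXtr : X.trace = 0) :
    ‖(D * X).trace‖ ≤ C * traceNorm X := by
  set e := hX.eigenvalues with he
  set u := hX.eigenvectorBasis with hu
  -- the coefficients
  set a : Fin 2 → Fin 2 → ℂ := fun k j => (inner ℂ (ψ j) (φ k) : ℂ) *
    ∑ i, (e i : ℂ) * (inner ℂ (φ k) (u i) : ℂ) * (inner ℂ (u i) (ψ j) : ℂ) with ha
  -- trace formula
  have hTr : (D * X).trace = ∑ k, ∑ j, (Cm k j : ℂ) * a k j := by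
    rw [hD, Finset.sum_mul, Matrix.trace_sum]
    refine Finset.sum_congr rfl fun k _ => ?_
    rw [Finset.sum_mul, Matrix.trace_sum]
    refine Finset.sum_congr rfl fun j _ => ?_
    rw [Matrix.smul_mul, Matrix.trace_smul, Matrix.smul_mul, Matrix.trace_smul,
      vecMulVec_trace ψ φ X hX k j, ha]
    simp only [smul_eq_mul]
    rfl
  -- trace of X as sum of eigenvalues
  have htrX : ∑ i, (e i : ℂ) = 0 := by
    have h1 : X.trace = ∑ i, (e i : ℂ) := by
      conv_lhs => rw [hX.spectral_theorem]
      rw [Unitary.conjStarAlgAut_apply, Matrix.trace_mul_cycle, Unitary.coe_star_mul_self, Matrix.one_mul,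
        Matrix.trace_diagonal]
      rfl
    rw [← h1, hXtr]
  -- sum of a's is zero
  have h1 : ∀ (j i : Fin 2), ∑ k, (inner ℂ (ψ j) (φ k) : ℂ) * (inner ℂ (φ k) (u i) : ℂ)
      = (inner ℂ (ψ j) (u i) : ℂ) := fun j i => φ.sum_inner_mul_inner _ _
  have h2 : ∀ i : Fin 2, ∑ j, (inner ℂ (ψ j) (u i) : ℂ) * (inner ℂ (u i) (ψ j) : ℂ) = 1 := by
    intro i
    have hs := ψ.sum_inner_mul_inner (u i) (u i)
    have hn : (inner ℂ (u i) (u i) : ℂ) = 1 := by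
      rw [inner_self_eq_norm_sq_to_K]
      simp [u.orthonormal.1 i]
    rw [hn] at hs
    rw [← hs]
    simp only [Fin.sum_univ_two]
    ring
  have hzero : ∑ k, ∑ j, a k j = 0 := by
    have expand : ∑ k, ∑ j, a k j = ∑ i, (e i : ℂ) *
        ∑ j, (∑ k, (inner ℂ (ψ j) (φ k) : ℂ) * (inner ℂ (φ k) (u i) : ℂ)) *
          (inner ℂ (u i) (ψ j) : ℂ) := by
      simp only [ha, Fin.sum_univ_two]
      ring
    rw [expand]
    simp only [h1]
    have : ∀ i : Fin 2, ∑ j, (inner ℂ (ψ j) (u i) : ℂ) * (inner ℂ (u i) (ψ j) : ℂ) = 1 := h2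
    calc ∑ i, (e i : ℂ) * ∑ j, (inner ℂ (ψ j) (u i) : ℂ) * (inner ℂ (u i) (ψ j) : ℂ)
        = ∑ i, (e i : ℂ) * 1 := by
          refine Finset.sum_congr rfl fun i _ => ?_
          rw [h2 i]
      _ = 0 := by simpa using htrX
  -- rewrite trace with shifted coefficients
  have hTr2 : (D * X).trace = ∑ k, ∑ j, ((Cm k j : ℂ) - ((C/2 : ℝ) : ℂ)) * a k j := by
    rw [hTr]
    have : ∑ k, ∑ j, ((C/2 : ℝ) : ℂ) * a k j = 0 := by
      simp only [← Finset.mul_sum]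
      rw [hzero, mul_zero]
    simp only [sub_mul, Finset.sum_sub_distrib]
    rw [this, sub_zero]
  -- norm bounds
  have habs : ∀ k j, |Cm k j - C/2| ≤ C/2 := by
    intro k j
    rw [abs_le]
    constructor <;> linarith [(hCm k j).1, (hCm k j).2]
  have hbound2 : ∀ k j : Fin 2, ‖a k j‖ ≤
      ∑ i, |e i| * ‖(inner ℂ (φ k) (u i) : ℂ)‖ * ‖(inner ℂ (u i) (ψ j) : ℂ)‖ := by
    intro k j
    rw [ha]
    simp only [norm_mul]
    have hip : ‖(inner ℂ (ψ j) (φ k) : ℂ)‖ ≤ 1 := by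
      have := norm_inner_le_norm (𝕜 := ℂ) (ψ j) (φ k)
      simpa [ψ.orthonormal.1 j, φ.orthonormal.1 k] using this
    calc ‖(inner ℂ (ψ j) (φ k) : ℂ)‖ * ‖∑ i, (e i : ℂ) * (inner ℂ (φ k) (u i) : ℂ) *
          (inner ℂ (u i) (ψ j) : ℂ)‖
        ≤ 1 * ‖∑ i, (e i : ℂ) * (inner ℂ (φ k) (u i) : ℂ) * (inner ℂ (u i) (ψ j) : ℂ)‖ := by
          apply mul_le_mul_of_nonneg_right hip (norm_nonneg _)
      _ = ‖∑ i, (e i : ℂ) * (inner ℂ (φ k) (u i) : ℂ) * (inner ℂ (u i) (ψ j) : ℂ)‖ := one_mul _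
      _ ≤ ∑ i, ‖(e i : ℂ) * (inner ℂ (φ k) (u i) : ℂ) * (inner ℂ (u i) (ψ j) : ℂ)‖ :=
          norm_sum_le _ _
      _ = ∑ i, |e i| * ‖(inner ℂ (φ k) (u i) : ℂ)‖ * ‖(inner ℂ (u i) (ψ j) : ℂ)‖ := by
          refine Finset.sum_congr rfl fun i _ => ?_
          rw [norm_mul, norm_mul, Complex.norm_real, Real.norm_eq_abs]
  -- Parseval facts
  have hparP : ∀ i : Fin 2, ∑ k, ‖(inner ℂ (φ k) (u i) : ℂ)‖^2 = 1 := by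
    intro i
    have hs := φ.sum_inner_mul_inner (u i) (u i)
    have hn : (inner ℂ (u i) (u i) : ℂ) = 1 := by
      rw [inner_self_eq_norm_sq_to_K]
      simp [u.orthonormal.1 i]
    rw [hn] at hs
    have : ∀ k : Fin 2, (inner ℂ (u i) (φ k) : ℂ) * (inner ℂ (φ k) (u i) : ℂ)
        = ((‖(inner ℂ (φ k) (u i) : ℂ)‖^2 : ℝ) : ℂ) := by
      intro k
      have hcj : (inner ℂ (u i) (φ k) : ℂ) = (starRingEnd ℂ) (inner ℂ (φ k) (u i) : ℂ) :=
        (inner_conj_symm (u i) (φ k)).symm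
      rw [hcj, RCLike.conj_mul]
      norm_cast
    rw [Finset.sum_congr rfl fun k _ => this k] at hs
    exact_mod_cast hs
  have hparQ : ∀ i : Fin 2, ∑ j, ‖(inner ℂ (u i) (ψ j) : ℂ)‖^2 = 1 := by
    intro i
    have hs := ψ.sum_inner_mul_inner (u i) (u i)
    have hn : (inner ℂ (u i) (u i) : ℂ) = 1 := by
      rw [inner_self_eq_norm_sq_to_K]
      simp [u.orthonormal.1 i]
    rw [hn] at hs
    have : ∀ j : Fin 2, (inner ℂ (u i) (ψ j) : ℂ) * (inner ℂ (ψ j) (u i) : ℂ)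
        = ((‖(inner ℂ (u i) (ψ j) : ℂ)‖^2 : ℝ) : ℂ) := by
      intro j
      have hcj : (inner ℂ (ψ j) (u i) : ℂ) = (starRingEnd ℂ) (inner ℂ (u i) (ψ j) : ℂ) :=
        (inner_conj_symm (ψ j) (u i)).symm
      rw [hcj, RCLike.mul_conj]
      norm_cast
    rw [Finset.sum_congr rfl fun j _ => this j] at hs
    exact_mod_cast hs
  have hprod : ∀ i : Fin 2, (∑ k, ‖(inner ℂ (φ k) (u i) : ℂ)‖) *
      (∑ j, ‖(inner ℂ (u i) (ψ j) : ℂ)‖) ≤ 2 := by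
    intro i
    have hp := hparP i
    have hq := hparQ i
    simp only [Fin.sum_univ_two] at hp hq ⊢
    nlinarith [norm_nonneg (inner ℂ (φ 0) (u i) : ℂ), norm_nonneg (inner ℂ (φ 1) (u i) : ℂ),
      norm_nonneg (inner ℂ (u i) (ψ 0) : ℂ), norm_nonneg (inner ℂ (u i) (ψ 1) : ℂ),
      sq_nonneg (‖(inner ℂ (φ 0) (u i) : ℂ)‖ - ‖(inner ℂ (u i) (ψ 0) : ℂ)‖),
      sq_nonneg (‖(inner ℂ (φ 1) (u i) : ℂ)‖ - ‖(inner ℂ (u i) (ψ 1) : ℂ)‖),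
      sq_nonneg (‖(inner ℂ (φ 0) (u i) : ℂ)‖ - ‖(inner ℂ (u i) (ψ 1) : ℂ)‖),
      sq_nonneg (‖(inner ℂ (φ 1) (u i) : ℂ)‖ - ‖(inner ℂ (u i) (ψ 0) : ℂ)‖),
      sq_nonneg (‖(inner ℂ (φ 0) (u i) : ℂ)‖ + ‖(inner ℂ (φ 1) (u i) : ℂ)‖
        - ‖(inner ℂ (u i) (ψ 0) : ℂ)‖ - ‖(inner ℂ (u i) (ψ 1) : ℂ)‖)]
  -- final chain
  calc ‖(D * X).trace‖
      = ‖∑ k, ∑ j, ((Cm k j : ℂ) - ((C/2 : ℝ) : ℂ)) * a k j‖ := by rw [hTr2]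
    _ ≤ ∑ k, ∑ j, ‖((Cm k j : ℂ) - ((C/2 : ℝ) : ℂ)) * a k j‖ := by
        refine (norm_sum_le _ _).trans (Finset.sum_le_sum fun k _ => norm_sum_le _ _)
    _ = ∑ k, ∑ j, |Cm k j - C/2| * ‖a k j‖ := by
        refine Finset.sum_congr rfl fun k _ => Finset.sum_congr rfl fun j _ => ?_
        rw [norm_mul]
        congr 1
        rw [show (Cm k j : ℂ) - ((C/2 : ℝ) : ℂ) = ((Cm k j - C/2 : ℝ) : ℂ) by push_cast; ring,
          Complex.norm_real, Real.norm_eq_abs]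
    _ ≤ ∑ k, ∑ j, (C/2) * ‖a k j‖ := by
        refine Finset.sum_le_sum fun k _ => Finset.sum_le_sum fun j _ => ?_
        exact mul_le_mul_of_nonneg_right (habs k j) (norm_nonneg _)
    _ ≤ ∑ k : Fin 2, ∑ j : Fin 2, (C/2) *
        ∑ i, |e i| * ‖(inner ℂ (φ k) (u i) : ℂ)‖ * ‖(inner ℂ (u i) (ψ j) : ℂ)‖ := by
        refine Finset.sum_le_sum fun k _ => Finset.sum_le_sum fun j _ => ?_
        exact mul_le_mul_of_nonneg_left (hbound2 k j) (by linarith)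
    _ = (C/2) * ∑ i : Fin 2, |e i| * ((∑ k, ‖(inner ℂ (φ k) (u i) : ℂ)‖) *
        (∑ j, ‖(inner ℂ (u i) (ψ j) : ℂ)‖)) := by
        simp only [Fin.sum_univ_two]
        ring
    _ ≤ (C/2) * ∑ i : Fin 2, |e i| * 2 := by
        apply mul_le_mul_of_nonneg_left _ (by linarith)
        refine Finset.sum_le_sum fun i _ => ?_
        exact mul_le_mul_of_nonneg_left (hprod i) (abs_nonneg _)
    _ = C * ∑ i, |e i| := by
        simp only [Fin.sum_univ_two]
        ring
    _ = C * traceNorm X := by rw [traceNorm_herm hX]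
end

section
/- Let ρ and σ be positive definite d×d density matrices, let λ_ρ be the largest eigenvalue of ρ, let α_ρ and α_σ be the smallest eigenvalues of ρ and σ respectively, and assume α_ρ ≠ α_σ. Then the Umegaki relative entropy satisfies S(ρ‖σ) ≤ ‖ρ−σ‖₁ · λ_ρ · (log α_ρ − log α_σ)/(α_ρ − α_σ). -/
open Matrix ComplexOrder

section AuxiliaryLemmas

open MeasureTheory Set Filter

lemma integral_resolvent {a b : ℝ} (ha : 0 < a) (hb : 0 < b) :
    IntegrableOn (fun s : ℝ => 1/(b+s) - 1/(a+s)) (Ioi 0) ∧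
    ∫ s in Ioi (0:ℝ), (1/(b+s) - 1/(a+s)) = Real.log a - Real.log b := by
  have main : ∀ a b : ℝ, 0 < a → 0 < b → b ≤ a →
      IntegrableOn (fun s : ℝ => 1/(b+s) - 1/(a+s)) (Ioi 0) ∧
      ∫ s in Ioi (0:ℝ), (1/(b+s) - 1/(a+s)) = Real.log a - Real.log b := by
    intro a b ha hb hba
    set g : ℝ → ℝ := fun s => Real.log (b+s) - Real.log (a+s) with hg
    have hderiv : ∀ s ∈ Ici (0:ℝ), HasDerivAt g (1/(b+s) - 1/(a+s)) s := by
      intro s hs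
      have hs0 : (0:ℝ) ≤ s := hs
      have h1 : HasDerivAt (fun s : ℝ => Real.log (b+s)) (1/(b+s)) s := by
        have : HasDerivAt (fun s : ℝ => b + s) 1 s := (hasDerivAt_id s).const_add b
        simpa [Function.comp_def] using (Real.hasDerivAt_log (by positivity)).comp s this
      have h2 : HasDerivAt (fun s : ℝ => Real.log (a+s)) (1/(a+s)) s := by
        have : HasDerivAt (fun s : ℝ => a + s) 1 s := (hasDerivAt_id s).const_add a
        simpa [Function.comp_def] using (Real.hasDerivAt_log (by positivity)).comp s this
      exact h1.sub h2
    have hpos : ∀ s ∈ Ioi (0:ℝ), 0 ≤ 1/(b+s) - 1/(a+s) := by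
      intro s hs
      have hs0 : (0:ℝ) < s := hs
      have : 1/(a+s) ≤ 1/(b+s) := by
        apply one_div_le_one_div_of_le (by positivity) (by linarith)
      linarith
    have htend : Tendsto g atTop (nhds 0) := by
      have h1 : Tendsto (fun s : ℝ => (b-a)/(a+s)) atTop (nhds 0) := by
        apply Tendsto.div_atTop tendsto_const_nhds
        exact tendsto_atTop_add_const_left _ a tendsto_id
      have h2 : Tendsto (fun s : ℝ => 1 + (b-a)/(a+s)) atTop (nhds 1) := by
        simpa using h1.const_add 1
      have h3 : Tendsto (fun s : ℝ => Real.log (1 + (b-a)/(a+s))) atTop (nhds 0) := by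
        have := (Real.continuousAt_log (by norm_num : (1:ℝ) ≠ 0)).tendsto.comp h2
        simpa [Function.comp_def] using this
      apply h3.congr'
      filter_upwards [eventually_gt_atTop 0] with s hs
      have hbs : 0 < b + s := by linarith
      have has : 0 < a + s := by linarith
      have : 1 + (b-a)/(a+s) = (b+s)/(a+s) := by field_simp; ring
      rw [this, Real.log_div (by positivity) (by positivity), hg]
    constructor
    · exact integrableOn_Ioi_deriv_of_nonneg' hderiv hpos htend
    · rw [integral_Ioi_of_hasDerivAt_of_nonneg' hderiv hpos htend]
      simp [hg]
  rcases le_total b a with h | h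
  · exact main a b ha hb h
  · obtain ⟨hi, hv⟩ := main b a hb ha h
    constructor
    · have := hi.neg
      apply this.congr
      filter_upwards with s
      simp
    · have : (fun s : ℝ => 1/(b+s) - 1/(a+s)) = fun s => -(1/(a+s) - 1/(b+s)) := by
        funext s; ring
      rw [this, integral_neg, hv]; ring

lemma conj_mul_self' (z : ℂ) : (starRingEnd ℂ) z * z = ((‖z‖ : ℂ))^2 := by
  rw [mul_comm, Complex.mul_conj, Complex.normSq_eq_norm_sq]
  push_cast
  ring

lemma norm_sq_eq_re_mul_conj (z : ℂ) : (‖z‖:ℝ)^2 = (z * (starRingEnd ℂ) z).re := by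
  rw [Complex.mul_conj]
  simp [Complex.normSq_eq_norm_sq]
  norm_cast

lemma trace_form {d : ℕ} (P : Matrix (Fin d) (Fin d) ℂ) (c e : Fin d → ℝ) :
    (Matrix.diagonal (fun i => (c i : ℂ)) * Pᴴ * Matrix.diagonal (fun i => (e i : ℂ)) * P).trace
    = ((∑ j, ∑ k, c j * e k * ‖P k j‖ ^ 2 : ℝ) : ℂ) := by
  push_cast
  simp only [Matrix.trace, Matrix.diag, Matrix.mul_apply, Matrix.diagonal_apply,
    Matrix.conjTranspose_apply, ite_mul, mul_ite, zero_mul, mul_zero, Finset.sum_ite_eq,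
    Finset.sum_ite_eq', Finset.mem_univ, if_true, Finset.sum_mul, Finset.mul_sum]
  apply Finset.sum_congr rfl
  intro j _
  apply Finset.sum_congr rfl
  intro k _
  rw [show ((‖P k j‖:ℂ))^2 = (starRingEnd ℂ) (P k j) * P k j from (conj_mul_self' _).symm]
  rw [show (star (P k j) : ℂ) = (starRingEnd ℂ) (P k j) from rfl]
  ring

lemma trace_UVdiag {d : ℕ} (U V : Matrix (Fin d) (Fin d) ℂ) (c e : Fin d → ℝ) :
    (U * Matrix.diagonal (fun i => (c i : ℂ)) * Uᴴ *
      (V * Matrix.diagonal (fun i => (e i : ℂ)) * Vᴴ)).trace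
    = ((∑ j, ∑ k, c j * e k * ‖(Vᴴ * U) k j‖ ^ 2 : ℝ) : ℂ) := by
  rw [show U * Matrix.diagonal (fun i => (c i : ℂ)) * Uᴴ *
      (V * Matrix.diagonal (fun i => (e i : ℂ)) * Vᴴ)
      = U * (Matrix.diagonal (fun i => (c i : ℂ)) * (Uᴴ *
        (V * (Matrix.diagonal (fun i => (e i : ℂ)) * Vᴴ)))) by
    simp only [Matrix.mul_assoc]]
  rw [Matrix.trace_mul_comm]
  rw [show Matrix.diagonal (fun i => (c i : ℂ)) * (Uᴴ *
        (V * (Matrix.diagonal (fun i => (e i : ℂ)) * Vᴴ))) * U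
      = Matrix.diagonal (fun i => (c i : ℂ)) * (Vᴴ * U)ᴴ *
        Matrix.diagonal (fun i => (e i : ℂ)) * (Vᴴ * U) by
    simp only [Matrix.conjTranspose_mul, Matrix.conjTranspose_conjTranspose, Matrix.mul_assoc]]
  exact trace_form _ _ _

lemma spec_decomp {d : ℕ} {A : Matrix (Fin d) (Fin d) ℂ} (hA : A.IsHermitian) :
    A = (hA.eigenvectorUnitary : Matrix (Fin d) (Fin d) ℂ) *
      Matrix.diagonal (fun i => (hA.eigenvalues i : ℂ)) *
      (hA.eigenvectorUnitary : Matrix (Fin d) (Fin d) ℂ)ᴴ := by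
  conv_lhs => rw [hA.spectral_theorem]
  rfl

lemma matFun_eq {d : ℕ} {A : Matrix (Fin d) (Fin d) ℂ} (hA : A.IsHermitian) (f : ℝ → ℝ) :
    matFun hA f = (hA.eigenvectorUnitary : Matrix (Fin d) (Fin d) ℂ) *
      Matrix.diagonal (fun i => (f (hA.eigenvalues i) : ℂ)) *
      (hA.eigenvectorUnitary : Matrix (Fin d) (Fin d) ℂ)ᴴ := rfl

lemma conj_mul_conj {d : ℕ} {W : Matrix (Fin d) (Fin d) ℂ} (hW : Wᴴ * W = 1)
    (D E : Matrix (Fin d) (Fin d) ℂ) :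
    (W * D * Wᴴ) * (W * E * Wᴴ) = W * (D * E) * Wᴴ := by
  calc (W * D * Wᴴ) * (W * E * Wᴴ) = W * (D * ((Wᴴ * W) * (E * Wᴴ))) := by
        simp only [Matrix.mul_assoc]
    _ = W * (D * E) * Wᴴ := by rw [hW, Matrix.one_mul]; simp only [Matrix.mul_assoc]

lemma traceNorm_hermitian {d : ℕ} (A : Matrix (Fin d) (Fin d) ℂ) (hA : A.IsHermitian) :
    traceNorm A = ∑ i, |hA.eigenvalues i| := by
  set W : Matrix (Fin d) (Fin d) ℂ := (hA.eigenvectorUnitary : Matrix (Fin d) (Fin d) ℂ) with hWdef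
  have hW : Wᴴ * W = 1 := by
    rw [hWdef, ← Matrix.star_eq_conjTranspose]
    exact Matrix.mem_unitaryGroup_iff'.mp hA.eigenvectorUnitary.2
  have hspec : A = W * Matrix.diagonal (fun i => (hA.eigenvalues i : ℂ)) * Wᴴ := spec_decomp hA
  have hdd : Matrix.diagonal (fun i => ((|hA.eigenvalues i| : ℝ) : ℂ)) *
      Matrix.diagonal (fun i => ((|hA.eigenvalues i| : ℝ) : ℂ)) =
      Matrix.diagonal (fun i => (hA.eigenvalues i : ℂ)) *
      Matrix.diagonal (fun i => (hA.eigenvalues i : ℂ)) := by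
    rw [Matrix.diagonal_mul_diagonal, Matrix.diagonal_mul_diagonal]
    apply congrArg Matrix.diagonal
    funext i
    norm_cast
    rw [abs_mul_abs_self]
  have hsq : (W * Matrix.diagonal (fun i => ((|hA.eigenvalues i| : ℝ) : ℂ)) * Wᴴ) ^ 2
      = Aᴴ * A := by
    rw [hA.eq, pow_two, conj_mul_conj hW, hdd, ← conj_mul_conj hW, ← hspec]
  have hpsd : (W * Matrix.diagonal (fun i => ((|hA.eigenvalues i| : ℝ) : ℂ)) * Wᴴ).PosSemidef := by
    apply Matrix.PosSemidef.mul_mul_conjTranspose_same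
    rw [Matrix.posSemidef_diagonal_iff]
    intro i
    rw [Complex.zero_le_real]
    positivity
  have hH := Matrix.posSemidef_conjTranspose_mul_self A
  have hWU : (hH.1.eigenvectorUnitary : Matrix (Fin d) (Fin d) ℂ)ᴴ *
      (hH.1.eigenvectorUnitary : Matrix (Fin d) (Fin d) ℂ) = 1 := by
    rw [← Matrix.star_eq_conjTranspose]
    exact Matrix.mem_unitaryGroup_iff'.mp hH.1.eigenvectorUnitary.2
  have hev : ∀ i, ((Real.sqrt (hH.1.eigenvalues i) : ℝ) : ℂ) * ((Real.sqrt (hH.1.eigenvalues i) : ℝ) : ℂ)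
      = (hH.1.eigenvalues i : ℂ) := fun i => by
    rw [← Complex.ofReal_mul, Real.mul_self_sqrt (hH.eigenvalues_nonneg i)]
  have hM1sq : ((hH.1.eigenvectorUnitary : Matrix (Fin d) (Fin d) ℂ) *
      Matrix.diagonal (fun i => ((Real.sqrt (hH.1.eigenvalues i) : ℝ) : ℂ)) *
      (star hH.1.eigenvectorUnitary : Matrix (Fin d) (Fin d) ℂ)) *
      ((hH.1.eigenvectorUnitary : Matrix (Fin d) (Fin d) ℂ) *
      Matrix.diagonal (fun i => ((Real.sqrt (hH.1.eigenvalues i) : ℝ) : ℂ)) *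
      (star hH.1.eigenvectorUnitary : Matrix (Fin d) (Fin d) ℂ)) = Aᴴ * A := by
    rw [Matrix.star_eq_conjTranspose, conj_mul_conj hWU]
    simp only [Matrix.diagonal_mul_diagonal, hev]
    exact (spec_decomp hH.1).symm
  have hM1psd : ((hH.1.eigenvectorUnitary : Matrix (Fin d) (Fin d) ℂ) *
      Matrix.diagonal (fun i => ((Real.sqrt (hH.1.eigenvalues i) : ℝ) : ℂ)) *
      (star hH.1.eigenvectorUnitary : Matrix (Fin d) (Fin d) ℂ)).PosSemidef := by
    rw [Matrix.star_eq_conjTranspose]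
    apply Matrix.PosSemidef.mul_mul_conjTranspose_same
    rw [Matrix.posSemidef_diagonal_iff]
    intro i
    rw [Complex.zero_le_real]
    positivity
  have hkey : W * Matrix.diagonal (fun i => ((|hA.eigenvalues i| : ℝ) : ℂ)) * Wᴴ =
      (hH.1.eigenvectorUnitary : Matrix (Fin d) (Fin d) ℂ) *
      Matrix.diagonal (fun i => ((Real.sqrt (hH.1.eigenvalues i) : ℝ) : ℂ)) *
      (star hH.1.eigenvectorUnitary : Matrix (Fin d) (Fin d) ℂ) := by
    open scoped MatrixOrder in
    exact (CFC.sqrt_unique (a := Aᴴ * A) (by rw [← pow_two]; exact hsq) hpsd.nonneg).symm.trans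
      (CFC.sqrt_unique hM1sq hM1psd.nonneg)
  rw [traceNorm, ← hkey, Matrix.trace_mul_comm, ← Matrix.mul_assoc, hW, Matrix.one_mul]
  simp [Matrix.trace, Matrix.diag]

lemma pointwise_bound {d : ℕ} (lam mu x : Fin d → ℝ) (P Q R : Matrix (Fin d) (Fin d) ℂ)
    (hPcol : ∀ j j' : Fin d, (∑ k, (starRingEnd ℂ) (P k j) * P k j') = if j = j' then 1 else 0)
    (hQrow : ∀ i : Fin d, (∑ j, ‖Q i j‖^2) = 1)
    (hRrow : ∀ i : Fin d, (∑ k, ‖R i k‖^2) = 1)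
    (hid : ∀ j k, ((lam j : ℂ) - mu k) * P k j = ∑ i, (starRingEnd ℂ) (R i k) * (x i : ℂ) * Q i j)
    (lρ aρ aσ s : ℝ) (hs : 0 ≤ s) (haρ : 0 < aρ) (haσ : 0 < aσ) (hlρ : 0 < lρ)
    (hlam1 : ∀ j, aρ ≤ lam j) (hlam2 : ∀ j, lam j ≤ lρ) (hmu : ∀ k, aσ ≤ mu k) :
    ∑ j, ∑ k, (‖P k j‖^2 * lam j) * (1/(mu k + s) - 1/(lam j + s)) ≤
      (∑ i, |x i|) * (lρ / ((aρ + s) * (aσ + s))) := by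
  set t : Fin d → ℝ := fun j => lam j / (lam j + s) with ht
  set r : Fin d → ℝ := fun k => 1 / (mu k + s) with hr
  set K : ℝ := lρ / ((aρ + s) * (aσ + s)) with hK
  have hlamp : ∀ j, 0 < lam j + s := fun j => by have := hlam1 j; linarith
  have hmup : ∀ k, 0 < mu k + s := fun k => by have := hmu k; linarith
  have htnn : ∀ j, 0 ≤ t j := fun j => by
    have h1 := hlam1 j; have h2 := hlamp j
    exact div_nonneg (by linarith) (by linarith)
  have htle : ∀ j, t j ≤ lρ / (aρ + s) := fun j => by
    exact div_le_div₀ hlρ.le (hlam2 j) (by linarith) (by have := hlam1 j; linarith)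
  have hrnn : ∀ k, 0 ≤ r k := fun k => by
    have := hmup k
    exact div_nonneg (by norm_num) (by linarith)
  have hrle : ∀ k, r k ≤ 1 / (aσ + s) := fun k => by
    exact div_le_div₀ (by norm_num) le_rfl (by linarith) (by have := hmu k; linarith)
  have hKnn : 0 ≤ K := by rw [hK]; positivity
  set u : Fin d → Fin d → ℂ :=
    fun i k => ∑ j, (t j : ℂ) * Q i j * (starRingEnd ℂ) (P k j) with hu
  set Z : Fin d → ℂ := fun i => ∑ k, (r k : ℂ) * (starRingEnd ℂ) (R i k) * u i k with hZ
  set A : Fin d → Fin d → Fin d → ℂ := fun i j k =>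
    (t j : ℂ) * (r k : ℂ) * (starRingEnd ℂ) (R i k) * (x i : ℂ) * Q i j *
      (starRingEnd ℂ) (P k j) with hA
  have step1 : ∑ j, ∑ k, (‖P k j‖^2 * lam j) * (1/(mu k + s) - 1/(lam j + s))
      = ∑ i, x i * (Z i).re := by
    have e1 : ∀ j k, (‖P k j‖^2 * lam j) * (1/(mu k + s) - 1/(lam j + s))
        = (t j * r k) * ((lam j - mu k) * ‖P k j‖^2) := by
      intro j k
      have h1 := (hlamp j).ne'
      have h2 := (hmup k).ne'
      simp only [ht, hr]
      field_simp
      ring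
    have e2 : ∀ j k, (lam j - mu k) * ‖P k j‖^2
        = ((((lam j : ℂ) - mu k) * P k j) * (starRingEnd ℂ) (P k j)).re := by
      intro j k
      rw [mul_assoc, Complex.mul_conj]
      rw [show ((lam j :ℂ) - mu k) = ((lam j - mu k : ℝ) : ℂ) by push_cast; ring]
      rw [← Complex.ofReal_mul, Complex.ofReal_re]
      congr 1
      simp [Complex.normSq_eq_norm_sq]
    have cmplx : ∑ j, ∑ k, ((t j * r k : ℝ) : ℂ) *
          ((∑ i, (starRingEnd ℂ) (R i k) * (x i : ℂ) * Q i j) * (starRingEnd ℂ) (P k j))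
        = ∑ i, (x i : ℂ) * Z i := by
      calc ∑ j, ∑ k, ((t j * r k : ℝ) : ℂ) *
            ((∑ i, (starRingEnd ℂ) (R i k) * (x i : ℂ) * Q i j) * (starRingEnd ℂ) (P k j))
          = ∑ j, ∑ k, ∑ i, A i j k := by
            apply Finset.sum_congr rfl; intro j _; apply Finset.sum_congr rfl; intro k _
            rw [Finset.sum_mul, Finset.mul_sum]
            apply Finset.sum_congr rfl; intro i _
            simp only [hA]
            push_cast
            ring
        _ = ∑ j, ∑ i, ∑ k, A i j k := by
            apply Finset.sum_congr rfl; intro j _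
            exact Finset.sum_comm
        _ = ∑ i, ∑ j, ∑ k, A i j k := Finset.sum_comm
        _ = ∑ i, (x i : ℂ) * Z i := by
            apply Finset.sum_congr rfl; intro i _
            rw [hZ]
            simp only
            rw [Finset.mul_sum, Finset.sum_comm]
            apply Finset.sum_congr rfl; intro k _
            simp only [hu, Finset.mul_sum]
            apply Finset.sum_congr rfl; intro j _
            simp only [hA]
            ring
    calc ∑ j, ∑ k, (‖P k j‖^2 * lam j) * (1/(mu k + s) - 1/(lam j + s))
        = ∑ j, ∑ k, (t j * r k) *
            ((((lam j : ℂ) - mu k) * P k j) * (starRingEnd ℂ) (P k j)).re := by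
          apply Finset.sum_congr rfl; intro j _; apply Finset.sum_congr rfl; intro k _
          rw [e1 j k, e2 j k]
      _ = (∑ j, ∑ k, ((t j * r k : ℝ) : ℂ) *
            ((∑ i, (starRingEnd ℂ) (R i k) * (x i : ℂ) * Q i j) *
              (starRingEnd ℂ) (P k j))).re := by
          rw [Complex.re_sum]
          apply Finset.sum_congr rfl; intro j _
          rw [Complex.re_sum]
          apply Finset.sum_congr rfl; intro k _
          rw [← hid j k, Complex.re_ofReal_mul]
      _ = (∑ i, (x i : ℂ) * Z i).re := by rw [cmplx]
      _ = ∑ i, x i * (Z i).re := by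
          rw [Complex.re_sum]
          apply Finset.sum_congr rfl; intro i _
          rw [Complex.re_ofReal_mul]
  have step2 : ∀ i, ‖Z i‖ ≤ K := by
    intro i
    have hconju : ∀ k, (starRingEnd ℂ) (u i k)
        = ∑ j, (t j : ℂ) * (starRingEnd ℂ) (Q i j) * P k j := by
      intro k
      simp only [hu, map_sum, _root_.map_mul, Complex.conj_conj, Complex.conj_ofReal]
    have husq : ∑ k, ‖u i k‖^2 ≤ (lρ / (aρ + s))^2 := by
      have expand : ∑ k, (u i k * (starRingEnd ℂ) (u i k))
          = ∑ j, ((t j : ℂ))^2 * (Q i j * (starRingEnd ℂ) (Q i j)) := by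
        calc ∑ k, (u i k * (starRingEnd ℂ) (u i k))
            = ∑ k, ∑ j, ∑ j', ((t j : ℂ) * Q i j * ((t j' : ℂ) * (starRingEnd ℂ) (Q i j'))) *
              ((starRingEnd ℂ) (P k j) * P k j') := by
              apply Finset.sum_congr rfl; intro k _
              rw [hconju k]
              simp only [hu]
              rw [Finset.sum_mul]
              apply Finset.sum_congr rfl; intro j _
              rw [Finset.mul_sum]
              apply Finset.sum_congr rfl; intro j' _
              ring
          _ = ∑ j, ∑ j', ∑ k, ((t j : ℂ) * Q i j * ((t j' : ℂ) * (starRingEnd ℂ) (Q i j'))) *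
              ((starRingEnd ℂ) (P k j) * P k j') := by
              rw [Finset.sum_comm]
              apply Finset.sum_congr rfl; intro j _
              rw [Finset.sum_comm]
          _ = ∑ j, ∑ j', ((t j : ℂ) * Q i j * ((t j' : ℂ) * (starRingEnd ℂ) (Q i j'))) *
              (if j = j' then (1:ℂ) else 0) := by
              apply Finset.sum_congr rfl; intro j _
              apply Finset.sum_congr rfl; intro j' _
              rw [← Finset.mul_sum, hPcol j j']
          _ = ∑ j, ((t j : ℂ))^2 * (Q i j * (starRingEnd ℂ) (Q i j)) := by
              apply Finset.sum_congr rfl; intro j _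
              simp only [mul_ite, mul_one, mul_zero, Finset.sum_ite_eq, Finset.mem_univ, if_true]
              ring
      have hre : ∑ k, ‖u i k‖^2 = ∑ j, (t j)^2 * ‖Q i j‖^2 := by
        calc ∑ k, ‖u i k‖^2 = (∑ k, (u i k * (starRingEnd ℂ) (u i k))).re := by
              rw [Complex.re_sum]
              exact Finset.sum_congr rfl fun k _ => norm_sq_eq_re_mul_conj _
          _ = (∑ j, ((t j : ℂ))^2 * (Q i j * (starRingEnd ℂ) (Q i j))).re := by rw [expand]
          _ = ∑ j, (t j)^2 * ‖Q i j‖^2 := by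
              rw [Complex.re_sum]
              apply Finset.sum_congr rfl
              intro j _
              rw [show ((t j : ℂ))^2 = ((t j ^2 : ℝ) : ℂ) by push_cast; ring,
                Complex.re_ofReal_mul, ← norm_sq_eq_re_mul_conj]
      rw [hre]
      calc ∑ j, (t j)^2 * ‖Q i j‖^2 ≤ ∑ j, (lρ / (aρ + s))^2 * ‖Q i j‖^2 := by
            apply Finset.sum_le_sum
            intro j _
            apply mul_le_mul_of_nonneg_right _ (sq_nonneg _)
            exact pow_le_pow_left₀ (htnn j) (htle j) 2
        _ = (lρ / (aρ + s))^2 := by rw [← Finset.mul_sum, hQrow i, mul_one]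
    have hZle : ‖Z i‖ ≤ ∑ k, (r k * ‖u i k‖) * ‖R i k‖ := by
      rw [hZ]
      refine (norm_sum_le _ _).trans ?_
      apply Finset.sum_le_sum
      intro k _
      rw [norm_mul, norm_mul, Complex.norm_real, RCLike.norm_conj]
      rw [Real.norm_eq_abs, abs_of_nonneg (hrnn k)]
      exact le_of_eq (by ring)
    have hCS : (∑ k, (r k * ‖u i k‖) * ‖R i k‖)^2 ≤
        (∑ k, (r k * ‖u i k‖)^2) * (∑ k, ‖R i k‖^2) :=
      Finset.sum_mul_sq_le_sq_mul_sq _ _ _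
    have hsum1 : ∑ k, (r k * ‖u i k‖)^2 ≤ (1/(aσ + s))^2 * (lρ / (aρ + s))^2 := by
      calc ∑ k, (r k * ‖u i k‖)^2 = ∑ k, (r k)^2 * ‖u i k‖^2 := by
            apply Finset.sum_congr rfl; intro k _; ring
        _ ≤ ∑ k, (1/(aσ + s))^2 * ‖u i k‖^2 := by
            apply Finset.sum_le_sum
            intro k _
            apply mul_le_mul_of_nonneg_right _ (sq_nonneg _)
            exact pow_le_pow_left₀ (hrnn k) (hrle k) 2
        _ = (1/(aσ + s))^2 * ∑ k, ‖u i k‖^2 := by rw [Finset.mul_sum]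
        _ ≤ (1/(aσ + s))^2 * (lρ / (aρ + s))^2 :=
            mul_le_mul_of_nonneg_left husq (sq_nonneg _)
    have hKsq : (1/(aσ + s))^2 * (lρ / (aρ + s))^2 = K^2 := by
      rw [hK]
      field_simp
    have hsumnn : 0 ≤ ∑ k, (r k * ‖u i k‖) * ‖R i k‖ := by
      apply Finset.sum_nonneg
      intro k _
      have := hrnn k
      positivity
    have hfin : (∑ k, (r k * ‖u i k‖) * ‖R i k‖)^2 ≤ K^2 := by
      rw [← hKsq]
      calc (∑ k, (r k * ‖u i k‖) * ‖R i k‖)^2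
          ≤ (∑ k, (r k * ‖u i k‖)^2) * (∑ k, ‖R i k‖^2) := hCS
        _ = ∑ k, (r k * ‖u i k‖)^2 := by rw [hRrow i, mul_one]
        _ ≤ (1/(aσ + s))^2 * (lρ / (aρ + s))^2 := hsum1
    have : ∑ k, (r k * ‖u i k‖) * ‖R i k‖ ≤ K := by nlinarith
    linarith [hZle]
  rw [step1]
  calc ∑ i, x i * (Z i).re ≤ ∑ i, |x i| * K := by
        apply Finset.sum_le_sum
        intro i _
        calc x i * (Z i).re ≤ |x i * (Z i).re| := le_abs_self _
          _ = |x i| * |(Z i).re| := abs_mul _ _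
          _ ≤ |x i| * ‖Z i‖ := by
              apply mul_le_mul_of_nonneg_left _ (abs_nonneg _)
              exact Complex.abs_re_le_norm _
          _ ≤ |x i| * K := mul_le_mul_of_nonneg_left (step2 i) (abs_nonneg _)
    _ = (∑ i, |x i|) * K := by rw [Finset.sum_mul]

end AuxiliaryLemmas

open MeasureTheory Set Filter

/-- upper continuity bound on the Umegaki relative entropy. -/
theorem relEntropy_le (d : ℕ)
    (ρ σ : Matrix (Fin d) (Fin d) ℂ) (hρ : ρ.PosDef) (hσ : σ.PosDef)
    (hρtr : ρ.trace = 1) (hσtr : σ.trace = 1)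
    (lρ aρ aσ : ℝ)
    (hl : IsGreatest (Set.range hρ.1.eigenvalues) lρ)
    (haρ : IsLeast (Set.range hρ.1.eigenvalues) aρ)
    (haσ : IsLeast (Set.range hσ.1.eigenvalues) aσ)
    (hne : aρ ≠ aσ) :
    relEntropy hρ.1 hσ.1 ≤
      traceNorm (ρ - σ) * lρ * ((Real.log aρ - Real.log aσ) / (aρ - aσ)) := by
  classical
  have hX : (ρ - σ).IsHermitian := hρ.1.sub hσ.1
  -- positivity of the spectral bounds
  have haρpos : 0 < aρ := by
    obtain ⟨j, hj⟩ := haρ.1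
    rw [← hj]; exact hρ.eigenvalues_pos j
  have haσpos : 0 < aσ := by
    obtain ⟨k, hk⟩ := haσ.1
    rw [← hk]; exact hσ.eigenvalues_pos k
  have hlρpos : 0 < lρ := by
    obtain ⟨j, hj⟩ := hl.1
    rw [← hj]; exact hρ.eigenvalues_pos j
  -- opaque spectral data for ρ
  obtain ⟨lam, hlampos, hlam1, hlam2, U, hU1, hU2, hspecρ, hmfρ⟩ :
      ∃ (lam : Fin d → ℝ), (∀ j, 0 < lam j) ∧ (∀ j, aρ ≤ lam j) ∧ (∀ j, lam j ≤ lρ) ∧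
      ∃ (U : Matrix (Fin d) (Fin d) ℂ), Uᴴ * U = 1 ∧ U * Uᴴ = 1 ∧
        ρ = U * Matrix.diagonal (fun i => (lam i : ℂ)) * Uᴴ ∧
        matFun hρ.1 Real.log =
          U * Matrix.diagonal (fun i => (Real.log (lam i) : ℂ)) * Uᴴ := by
    refine ⟨hρ.1.eigenvalues, fun j => hρ.eigenvalues_pos j, fun j => haρ.2 ⟨j, rfl⟩,
      fun j => hl.2 ⟨j, rfl⟩, (hρ.1.eigenvectorUnitary : Matrix (Fin d) (Fin d) ℂ),
      ?_, ?_, spec_decomp hρ.1, matFun_eq hρ.1 Real.log⟩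
    · rw [← Matrix.star_eq_conjTranspose]
      exact Matrix.mem_unitaryGroup_iff'.mp hρ.1.eigenvectorUnitary.2
    · rw [← Matrix.star_eq_conjTranspose]
      exact Matrix.mem_unitaryGroup_iff.mp hρ.1.eigenvectorUnitary.2
  -- opaque spectral data for σ
  obtain ⟨mu, hmupos, hmu1, V, hV1, hV2, hspecσ, hmfσ⟩ :
      ∃ (mu : Fin d → ℝ), (∀ k, 0 < mu k) ∧ (∀ k, aσ ≤ mu k) ∧
      ∃ (V : Matrix (Fin d) (Fin d) ℂ), Vᴴ * V = 1 ∧ V * Vᴴ = 1 ∧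
        σ = V * Matrix.diagonal (fun i => (mu i : ℂ)) * Vᴴ ∧
        matFun hσ.1 Real.log =
          V * Matrix.diagonal (fun i => (Real.log (mu i) : ℂ)) * Vᴴ := by
    refine ⟨hσ.1.eigenvalues, fun k => hσ.eigenvalues_pos k, fun k => haσ.2 ⟨k, rfl⟩,
      (hσ.1.eigenvectorUnitary : Matrix (Fin d) (Fin d) ℂ),
      ?_, ?_, spec_decomp hσ.1, matFun_eq hσ.1 Real.log⟩
    · rw [← Matrix.star_eq_conjTranspose]
      exact Matrix.mem_unitaryGroup_iff'.mp hσ.1.eigenvectorUnitary.2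
    · rw [← Matrix.star_eq_conjTranspose]
      exact Matrix.mem_unitaryGroup_iff.mp hσ.1.eigenvectorUnitary.2
  -- opaque spectral data for ρ - σ
  obtain ⟨x, W, hW1, hW2, hspecX, hTsum⟩ :
      ∃ (x : Fin d → ℝ) (W : Matrix (Fin d) (Fin d) ℂ), Wᴴ * W = 1 ∧ W * Wᴴ = 1 ∧
        ρ - σ = W * Matrix.diagonal (fun i => (x i : ℂ)) * Wᴴ ∧
        traceNorm (ρ - σ) = ∑ i, |x i| := by
    refine ⟨hX.eigenvalues, (hX.eigenvectorUnitary : Matrix (Fin d) (Fin d) ℂ),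
      ?_, ?_, spec_decomp hX, traceNorm_hermitian _ hX⟩
    · rw [← Matrix.star_eq_conjTranspose]
      exact Matrix.mem_unitaryGroup_iff'.mp hX.eigenvectorUnitary.2
    · rw [← Matrix.star_eq_conjTranspose]
      exact Matrix.mem_unitaryGroup_iff.mp hX.eigenvectorUnitary.2
  set P : Matrix (Fin d) (Fin d) ℂ := Vᴴ * U with hPdef
  set Q : Matrix (Fin d) (Fin d) ℂ := Wᴴ * U with hQdef
  set R : Matrix (Fin d) (Fin d) ℂ := Wᴴ * V with hRdef
  have hPP : Pᴴ * P = 1 := by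
    rw [hPdef]
    simp only [Matrix.conjTranspose_mul, Matrix.conjTranspose_conjTranspose]
    calc Uᴴ * V * (Vᴴ * U) = Uᴴ * (V * Vᴴ) * U := by simp only [Matrix.mul_assoc]
      _ = 1 := by rw [hV2, Matrix.mul_one, hU1]
  have hQQ : Q * Qᴴ = 1 := by
    rw [hQdef]
    simp only [Matrix.conjTranspose_mul, Matrix.conjTranspose_conjTranspose]
    calc Wᴴ * U * (Uᴴ * W) = Wᴴ * (U * Uᴴ) * W := by simp only [Matrix.mul_assoc]
      _ = 1 := by rw [hU2, Matrix.mul_one, hW1]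
  have hRR : R * Rᴴ = 1 := by
    rw [hRdef]
    simp only [Matrix.conjTranspose_mul, Matrix.conjTranspose_conjTranspose]
    calc Wᴴ * V * (Vᴴ * W) = Wᴴ * (V * Vᴴ) * W := by simp only [Matrix.mul_assoc]
      _ = 1 := by rw [hV2, Matrix.mul_one, hW1]
  have hPcol : ∀ j j' : Fin d, (∑ k, (starRingEnd ℂ) (P k j) * P k j')
      = if j = j' then 1 else 0 := by
    intro j j'
    have h0 : (Pᴴ * P) j j' = (1 : Matrix (Fin d) (Fin d) ℂ) j j' := by rw [hPP]
    rw [Matrix.one_apply] at h0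
    rw [← h0, Matrix.mul_apply]
    apply Finset.sum_congr rfl
    intro k _
    rw [Matrix.conjTranspose_apply]
    rfl
  have hrow : ∀ (M : Matrix (Fin d) (Fin d) ℂ), M * Mᴴ = 1 →
      ∀ i : Fin d, (∑ k, ‖M i k‖^2) = 1 := by
    intro M hM i
    have h1 : (M * Mᴴ) i i = (1 : Matrix (Fin d) (Fin d) ℂ) i i := by rw [hM]
    rw [Matrix.one_apply_eq, Matrix.mul_apply] at h1
    have h2 : ∑ k, (M i k * (starRingEnd ℂ) (M i k)) = 1 := by
      rw [← h1]
      apply Finset.sum_congr rfl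
      intro k _
      rw [Matrix.conjTranspose_apply]
      rfl
    have h3 := congrArg Complex.re h2
    rw [Complex.re_sum] at h3
    simp only [Complex.one_re] at h3
    rw [← h3]
    apply Finset.sum_congr rfl
    intro k _
    exact norm_sq_eq_re_mul_conj _
  have hQrow : ∀ i : Fin d, (∑ j, ‖Q i j‖^2) = 1 := hrow Q hQQ
  have hRrow : ∀ i : Fin d, (∑ k, ‖R i k‖^2) = 1 := hrow R hRR
  have hPnorm : ∀ j, ∑ k, ‖P k j‖^2 = 1 := by
    intro j
    have h0 := hPcol j j
    rw [if_pos rfl] at h0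
    have h1 := congrArg Complex.re h0
    rw [Complex.re_sum] at h1
    simp only [Complex.one_re] at h1
    rw [← h1]
    apply Finset.sum_congr rfl
    intro k _
    rw [norm_sq_eq_re_mul_conj]
    congr 1
    ring
  -- the entry identity
  have hid : ∀ j k, ((lam j : ℂ) - mu k) * P k j
      = ∑ i, (starRingEnd ℂ) (R i k) * (x i : ℂ) * Q i j := by
    have hm1 : P * Matrix.diagonal (fun i => (lam i : ℂ)) = Vᴴ * ρ * U := by
      rw [hspecρ]
      calc P * Matrix.diagonal (fun i => (lam i : ℂ))
          = Vᴴ * U * Matrix.diagonal (fun i => (lam i : ℂ)) * (Uᴴ * U) := by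
            rw [hU1, Matrix.mul_one, hPdef]
        _ = Vᴴ * (U * Matrix.diagonal (fun i => (lam i : ℂ)) * Uᴴ) * U := by
            simp only [Matrix.mul_assoc]
    have hm2 : Matrix.diagonal (fun i => (mu i : ℂ)) * P = Vᴴ * σ * U := by
      rw [hspecσ]
      calc Matrix.diagonal (fun i => (mu i : ℂ)) * P
          = (Vᴴ * V) * Matrix.diagonal (fun i => (mu i : ℂ)) * (Vᴴ * U) := by
            rw [hV1, Matrix.one_mul, hPdef]
        _ = Vᴴ * (V * Matrix.diagonal (fun i => (mu i : ℂ)) * Vᴴ) * U := by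
            simp only [Matrix.mul_assoc]
    have hm3 : Rᴴ * Matrix.diagonal (fun i => (x i : ℂ)) * Q = Vᴴ * (ρ - σ) * U := by
      rw [hspecX]
      calc Rᴴ * Matrix.diagonal (fun i => (x i : ℂ)) * Q
          = Vᴴ * W * Matrix.diagonal (fun i => (x i : ℂ)) * (Wᴴ * U) := by
            rw [hRdef, hQdef]
            simp only [Matrix.conjTranspose_mul, Matrix.conjTranspose_conjTranspose]
        _ = Vᴴ * (W * Matrix.diagonal (fun i => (x i : ℂ)) * Wᴴ) * U := by
            simp only [Matrix.mul_assoc]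
    have hmat : P * Matrix.diagonal (fun i => (lam i : ℂ))
        - Matrix.diagonal (fun i => (mu i : ℂ)) * P
        = Rᴴ * Matrix.diagonal (fun i => (x i : ℂ)) * Q := by
      rw [hm1, hm2, hm3, Matrix.mul_sub, Matrix.sub_mul]
    intro j k
    have hent := congrFun (congrFun hmat k) j
    rw [Matrix.sub_apply, Matrix.mul_diagonal, Matrix.diagonal_mul] at hent
    rw [show ((lam j : ℂ) - mu k) * P k j
      = P k j * (lam j : ℂ) - (mu k : ℂ) * P k j by ring, hent, Matrix.mul_apply]
    apply Finset.sum_congr rfl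
    intro i _
    rw [Matrix.mul_diagonal, Matrix.conjTranspose_apply]
    rfl
  -- the relative entropy as a double sum
  have hrel : relEntropy hρ.1 hσ.1
      = ∑ j, ∑ k, (‖P k j‖^2 * lam j) * (Real.log (lam j) - Real.log (mu k)) := by
    rw [relEntropy, Matrix.mul_sub, Matrix.trace_sub, Complex.sub_re, hmfρ, hmfσ]
    conv_lhs => rw [hspecρ]
    rw [trace_UVdiag U U lam (fun i => Real.log (lam i)),
      trace_UVdiag U V lam (fun i => Real.log (mu i))]
    rw [Complex.ofReal_re, Complex.ofReal_re, hU1, ← hPdef]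
    have hc1 : ∑ j, ∑ k, lam j * Real.log (lam k) * ‖(1 : Matrix (Fin d) (Fin d) ℂ) k j‖ ^ 2
        = ∑ j, lam j * Real.log (lam j) := by
      apply Finset.sum_congr rfl
      intro j _
      rw [Finset.sum_eq_single j]
      · simp [Matrix.one_apply_eq]
      · intro k _ hkj
        simp [Matrix.one_apply, hkj]
      · intro h; exact absurd (Finset.mem_univ j) h
    rw [hc1]
    have hc2 : ∑ j, lam j * Real.log (lam j)
        = ∑ j, ∑ k, (‖P k j‖^2 * lam j) * Real.log (lam j) := by
      apply Finset.sum_congr rfl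
      intro j _
      rw [← Finset.sum_mul, ← Finset.sum_mul, hPnorm j, one_mul]
    rw [hc2, ← Finset.sum_sub_distrib]
    apply Finset.sum_congr rfl
    intro j _
    rw [← Finset.sum_sub_distrib]
    apply Finset.sum_congr rfl
    intro k _
    ring
  -- integral representation
  have hterm : ∀ j k, (‖P k j‖^2 * lam j) * (Real.log (lam j) - Real.log (mu k))
      = ∫ s in Ioi (0:ℝ), (‖P k j‖^2 * lam j) * (1/(mu k + s) - 1/(lam j + s)) := by
    intro j k
    rw [MeasureTheory.integral_const_mul, (integral_resolvent (hlampos j) (hmupos k)).2]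
  have hFint : ∀ j k, IntegrableOn
      (fun s => (‖P k j‖^2 * lam j) * (1/(mu k + s) - 1/(lam j + s))) (Ioi 0) :=
    fun j k => ((integral_resolvent (hlampos j) (hmupos k)).1).const_mul _
  set F : ℝ → ℝ :=
    fun s => ∑ j, ∑ k, (‖P k j‖^2 * lam j) * (1/(mu k + s) - 1/(lam j + s)) with hF
  have hFint' : IntegrableOn F (Ioi 0) := by
    apply MeasureTheory.integrable_finset_sum
    intro j _
    apply MeasureTheory.integrable_finset_sum
    intro k _
    exact hFint j k
  have hSint : relEntropy hρ.1 hσ.1 = ∫ s in Ioi (0:ℝ), F s := by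
    rw [hrel]
    calc ∑ j, ∑ k, (‖P k j‖^2 * lam j) * (Real.log (lam j) - Real.log (mu k))
        = ∑ j, ∑ k, ∫ s in Ioi (0:ℝ),
            (‖P k j‖^2 * lam j) * (1/(mu k + s) - 1/(lam j + s)) :=
          Finset.sum_congr rfl fun j _ => Finset.sum_congr rfl fun k _ => hterm j k
      _ = ∑ j, ∫ s in Ioi (0:ℝ), ∑ k,
            (‖P k j‖^2 * lam j) * (1/(mu k + s) - 1/(lam j + s)) := by
          apply Finset.sum_congr rfl
          intro j _
          exact (MeasureTheory.integral_finset_sum _ (fun k _ => hFint j k)).symm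
      _ = ∫ s in Ioi (0:ℝ), F s := by
          rw [hF]
          exact (MeasureTheory.integral_finset_sum _
            (fun j _ => MeasureTheory.integrable_finset_sum _ (fun k _ => hFint j k))).symm
  set G : ℝ → ℝ :=
    fun s => (traceNorm (ρ - σ) * lρ / (aρ - aσ)) * (1/(aσ + s) - 1/(aρ + s)) with hG
  have hGint : IntegrableOn G (Ioi 0) :=
    ((integral_resolvent haρpos haσpos).1).const_mul _
  have hGval : ∫ s in Ioi (0:ℝ), G s
      = traceNorm (ρ - σ) * lρ * ((Real.log aρ - Real.log aσ) / (aρ - aσ)) := by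
    show ∫ s in Ioi (0:ℝ), (traceNorm (ρ - σ) * lρ / (aρ - aσ)) * (1/(aσ + s) - 1/(aρ + s))
      = traceNorm (ρ - σ) * lρ * ((Real.log aρ - Real.log aσ) / (aρ - aσ))
    rw [MeasureTheory.integral_const_mul, (integral_resolvent haρpos haσpos).2]
    ring
  have hFG : ∀ s ∈ Ioi (0:ℝ), F s ≤ G s := by
    intro s hs
    have hs0 : (0:ℝ) < s := hs
    have h1 := pointwise_bound lam mu x P Q R hPcol hQrow hRrow hid lρ aρ aσ s hs0.le
      haρpos haσpos hlρpos hlam1 hlam2 hmu1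
    have hGeq : G s = (∑ i, |x i|) * (lρ / ((aρ + s) * (aσ + s))) := by
      show (traceNorm (ρ - σ) * lρ / (aρ - aσ)) * (1/(aσ + s) - 1/(aρ + s))
        = (∑ i, |x i|) * (lρ / ((aρ + s) * (aσ + s)))
      rw [hTsum]
      have h2 : (0:ℝ) < aρ + s := by linarith
      have h3 : (0:ℝ) < aσ + s := by linarith
      have h4 : aρ - aσ ≠ 0 := sub_ne_zero.mpr hne
      have h5 : 1/(aσ + s) - 1/(aρ + s) = (aρ - aσ) * (1/((aρ + s)*(aσ + s))) := by
        rw [div_sub_div _ _ h3.ne' h2.ne', one_mul, mul_one,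
          show (aρ + s) - (aσ + s) = aρ - aσ by ring,
          show (aσ + s) * (aρ + s) = (aρ + s) * (aσ + s) by ring, div_eq_mul_one_div]
      rw [h5]
      calc (∑ i, |x i|) * lρ / (aρ - aσ) * ((aρ - aσ) * (1/((aρ + s)*(aσ + s))))
          = (∑ i, |x i|) * lρ * ((aρ - aσ)/(aρ - aσ)) * (1/((aρ + s)*(aσ + s))) := by
            ring
        _ = (∑ i, |x i|) * (lρ / ((aρ + s) * (aσ + s))) := by
            rw [div_self h4]
            ring
    rw [hGeq]
    exact h1
  have hmono := MeasureTheory.setIntegral_mono_on hFint' hGint measurableSet_Ioi hFG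
  rw [hSint, ← hGval]
  exact hmono
end
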